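/- Suppose γ : ℕ≥2 → ℝ₊ satisfies, for some ε ∈ (0, 1/2), constants ℓ_ε ∈ ℕ and C_ε < ∞, the recursion (1 - ε/L)·γ(L) ≤ ((L-2)/(L-1))·γ(L-1) + C_ε/L for all L ≥ ℓ_ε, and γ(L) < ∞ for every L. Then sup_L γ(L) < ∞. -/

import Mathlib

/-- abstract recursion lemma: if `γ : ℕ → ℝ` is nonnegative on `L ≥ 2`
and satisfies `(1 - ε/L)·γ(L) ≤ ((L-2)/(L-1))·γ(L-1) + C_ε/L` for all `L ≥ ℓ_ε`,
with `ε ∈ (0, 1/2)`, then `γ` is uniformly bounded over `L ≥ 2`. -/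
theorem recursion_uniform_bound
    (γ : ℕ → ℝ) (hγ : ∀ L : ℕ, 2 ≤ L → 0 ≤ γ L)
    (ε : ℝ) (hε : 0 < ε) (hε' : ε < 1 / 2) (ℓ : ℕ) (C : ℝ)
    (hrec : ∀ L : ℕ, ℓ ≤ L → 2 ≤ L →
      (1 - ε / L) * γ L ≤ (((L : ℝ) - 2) / ((L : ℝ) - 1)) * γ (L - 1) + C / L) :
    ∃ B : ℝ, ∀ L : ℕ, 2 ≤ L → γ L ≤ B := by
  set L₀ := max ℓ 3 with hL₀def
  set K := max (2 * |C|) (γ L₀) with hKdef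
  have hL₀3 : 3 ≤ L₀ := le_max_right _ _
  have hL₀ℓ : ℓ ≤ L₀ := le_max_left _ _
  have hKC : 2 * |C| ≤ K := le_max_left _ _
  have hK0 : 0 ≤ K := le_trans (by positivity) hKC
  have hCle : C ≤ K / 2 := by
    have := le_abs_self C; linarith
  have hKε : K * ε ≤ K / 2 := by nlinarith
  have key : ∀ n : ℕ, γ (L₀ + n) ≤ K := by
    intro n
    induction n with
    | zero => rw [Nat.add_zero]; exact le_max_right _ _
    | succ n ih =>
      have hL3 : 3 ≤ L₀ + n := le_trans hL₀3 (Nat.le_add_right _ _)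
      set L := L₀ + n with hLdef
      have hx : (3:ℝ) ≤ (L:ℝ) := by exact_mod_cast hL3
      have hrec' := hrec (L + 1) (by omega) (by omega)
      have hcast : ((L + 1 : ℕ) : ℝ) = (L:ℝ) + 1 := by push_cast; ring
      rw [show L + 1 - 1 = L from rfl, hcast] at hrec'
      set x : ℝ := (L:ℝ) with hxdef
      have hd : 0 < 1 - ε / (x + 1) := by
        have h1 : ε / (x + 1) < 1 := by
          rw [div_lt_one (by linarith)]; linarith
        linarith
      have hcoef : (0:ℝ) ≤ (x + 1 - 2) / (x + 1 - 1) := by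
        apply div_nonneg <;> linarith
      have hineq : x * (C + K * ε) ≤ K * (x + 1) := by
        have h1 : x * (C + K * ε) ≤ x * K := by nlinarith
        nlinarith
      have hstep : (x + 1 - 2) / (x + 1 - 1) * γ L + C / (x + 1) ≤ K * (1 - ε / (x + 1)) := by
        have h1 : (x + 1 - 2) / (x + 1 - 1) * γ L ≤ (x + 1 - 2) / (x + 1 - 1) * K :=
          mul_le_mul_of_nonneg_left ih hcoef
        have h2 : K * (1 - ε / (x + 1)) - ((x + 1 - 2) / (x + 1 - 1) * K + C / (x + 1))
            = (K * (x + 1) - x * (C + K * ε)) / (x * (x + 1)) := by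
          have hx0 : x ≠ 0 := ne_of_gt (by linarith)
          have hx1 : x + 1 ≠ 0 := ne_of_gt (by linarith)
          rw [show x + 1 - 1 = x by ring]
          field_simp
          ring
        have h3 : (0:ℝ) ≤ (K * (x + 1) - x * (C + K * ε)) / (x * (x + 1)) := by
          apply div_nonneg (by linarith)
          nlinarith
        linarith
      have hfin : (1 - ε / (x + 1)) * γ (L + 1) ≤ (1 - ε / (x + 1)) * K := by
        calc (1 - ε / (x + 1)) * γ (L + 1) ≤ _ := hrec'
          _ ≤ K * (1 - ε / (x + 1)) := hstep
          _ = (1 - ε / (x + 1)) * K := by ring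
      exact (mul_le_mul_iff_right₀ hd).mp hfin
  refine ⟨K + ∑ i ∈ Finset.Icc 2 L₀, γ i, fun L hL2 => ?_⟩
  have hsum0 : (0:ℝ) ≤ ∑ i ∈ Finset.Icc 2 L₀, γ i :=
    Finset.sum_nonneg fun i hi => hγ i (Finset.mem_Icc.mp hi).1
  rcases le_or_gt L₀ L with h | h
  · have := key (L - L₀)
    rw [Nat.add_sub_cancel' h] at this
    linarith
  · have hmem : L ∈ Finset.Icc 2 L₀ := Finset.mem_Icc.mpr ⟨hL2, h.le⟩
    have := Finset.single_le_sum (f := γ) (fun i hi => hγ i (Finset.mem_Icc.mp hi).1) hmem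
    linarith
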